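/- arXiv:1111.6677 — 4 statements merged into one kernel-verified Lean document; each statement's English description precedes it below -/
import Mathlib

section
/- Let D1 and D2 be multisets of n real numbers in [0,1] that differ by replacing one element (D2 = D1 with one element x removed and one element y inserted). Then the L1 distance between their sorted sequences is at most 1, i.e., if ⟨x_1,...,x_n⟩ and ⟨x'_1,...,x'_n⟩ are the nondecreasing orderings of D1 and D2, then Σ_{i=1}^n |x_i - x'_i| ≤ 1. -/
private lemma zip_self_abs (l : List ℝ) :
    (List.zipWith (fun a b => |a - b|) l l).sum = 0 := by
  induction l with
  | nil => simp
  | cons a t ih => simp [ih]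

/-- Core lemma A: replacing the head of a sorted list. -/
private lemma lemA : ∀ (t : List ℝ) (a y : ℝ), (a :: t).Pairwise (· ≤ ·) →
    (List.zipWith (fun a b => |a - b|) (a :: t)
      (List.orderedInsert (· ≤ ·) y t)).sum ≤ |a - y| := by
  intro t
  induction t with
  | nil => intro a y _; simp
  | cons b t' ih =>
    intro a y hs
    obtain ⟨ha, hbt⟩ := List.pairwise_cons.mp hs
    by_cases h : y ≤ b
    · simp [List.orderedInsert, h, zip_self_abs]
    · push_neg at h
      have hab : a ≤ b := ha b (by simp)
      have := ih b y hbt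
      have habs : |a - b| = b - a := by rw [abs_of_nonpos (by linarith)]; ring
      have hbys : |b - y| = y - b := by rw [abs_of_nonpos (by linarith)]; ring
      have hays : |a - y| = y - a := by rw [abs_of_nonpos (by linarith)]; ring
      simp only [List.orderedInsert, if_neg (not_le.mpr h), List.zipWith_cons_cons,
        List.sum_cons]
      linarith [this]

/-- Main list lemma: replacing an arbitrary element of a sorted list. -/
private lemma lemL : ∀ (t : List ℝ) (x y : ℝ), t.Pairwise (· ≤ ·) → x ∈ t →
    (List.zipWith (fun a b => |a - b|) t
      (List.orderedInsert (· ≤ ·) y (t.erase x))).sum ≤ |x - y| := by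
  intro t
  induction t with
  | nil => intro x y _ hx; simp at hx
  | cons a s ih =>
    intro x y hs hx
    obtain ⟨ha, hss⟩ := List.pairwise_cons.mp hs
    by_cases hxa : x = a
    · subst hxa
      rw [List.erase_cons_head]
      exact lemA s x y hs
    · have hxs : x ∈ s := by
        rcases List.mem_cons.mp hx with h | h
        · exact absurd h hxa
        · exact h
      have hax : a ≤ x := ha x hxs
      rw [List.erase_cons_tail (by simp [Ne.symm hxa])]
      by_cases hy : y ≤ a
      · -- orderedInsert y (a :: s.erase x) = y :: a :: s.erase x
        have hoi : List.orderedInsert (· ≤ ·) y (a :: s.erase x)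
            = y :: a :: s.erase x := by simp [List.orderedInsert, hy]
        rw [hoi]
        -- a :: s.erase x = orderedInsert a (s.erase x)
        have hins : a :: s.erase x = List.orderedInsert (· ≤ ·) a (s.erase x) := by
          cases hse : s.erase x with
          | nil => simp [List.orderedInsert]
          | cons b l =>
            have hb : b ∈ s.erase x := by rw [hse]; simp
            have : a ≤ b := ha b (List.mem_of_mem_erase hb)
            simp [List.orderedInsert, this]
        have hrec := ih x a hss hxs
        rw [← hins] at hrec
        have hay : |a - y| = a - y := abs_of_nonneg (by linarith)
        have hxa' : |x - a| = x - a := abs_of_nonneg (by linarith)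
        have hxy : |x - y| = x - y := abs_of_nonneg (by linarith)
        simp only [List.zipWith_cons_cons, List.sum_cons]
        linarith [hrec]
      · push_neg at hy
        have hoi : List.orderedInsert (· ≤ ·) y (a :: s.erase x)
            = a :: List.orderedInsert (· ≤ ·) y (s.erase x) := by
          simp [List.orderedInsert, not_le.mpr hy]
        rw [hoi]
        simp only [List.zipWith_cons_cons, List.sum_cons, sub_self, abs_zero, zero_add]
        exact ih x y hss hxs

/-- The L1 distance between the sorted sequences of two replacement-neighboring
multisets of `n` reals in `[0,1]` is at most 1. -/
theorem stmt_0 (n : ℕ) (D1 D2 : Multiset ℝ) (x y : ℝ)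
    (hcard : Multiset.card D1 = n)
    (hD1 : ∀ a ∈ D1, a ∈ Set.Icc (0:ℝ) 1)
    (hD2 : ∀ a ∈ D2, a ∈ Set.Icc (0:ℝ) 1)
    (hx : x ∈ D1)
    (hrep : D2 = D1.erase x + {y}) :
    (List.zipWith (fun a b => |a - b|) (D1.sort (· ≤ ·)) (D2.sort (· ≤ ·))).sum ≤ 1 := by
  set l := D1.sort (· ≤ ·) with hl
  have hlsort : l.Pairwise (· ≤ ·) := Multiset.pairwise_sort _ _
  have hlcoe : (l : Multiset ℝ) = D1 := Multiset.sort_eq _ _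
  have hxl : x ∈ l := by rw [← Multiset.mem_coe, hlcoe]; exact hx
  -- identify D2.sort
  have hD2sort : D2.sort (· ≤ ·) = List.orderedInsert (· ≤ ·) y (l.erase x) := by
    apply List.Perm.eq_of_pairwise' (Multiset.pairwise_sort _ _)
      (List.Pairwise.orderedInsert _ _ (hlsort.erase x))
    rw [← Multiset.coe_eq_coe, Multiset.sort_eq]
    have h1 : ((List.orderedInsert (· ≤ ·) y (l.erase x) : List ℝ) : Multiset ℝ)
        = (y :: l.erase x : List ℝ) := by
      rw [Multiset.coe_eq_coe]
      exact List.perm_orderedInsert _ _ _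
    rw [hrep, h1]
    rw [← Multiset.cons_coe, ← Multiset.coe_erase, hlcoe]
    rw [← Multiset.singleton_add, add_comm]
  rw [hD2sort]
  have hmain := lemL l x y hlsort hxl
  have hyD2 : y ∈ D2 := by rw [hrep]; simp
  have hx1 := hD1 x hx
  have hy1 := hD2 y hyD2
  simp only [Set.mem_Icc] at hx1 hy1
  have : |x - y| ≤ 1 := by rw [abs_sub_le_iff]; constructor <;> linarith
  linarith
end

section
/- Let ⟨x_1,...,x_n⟩ be the sorted sequence of a multiset D of reals in [0,1], and suppose x_i is replaced by a value A with x_i < A ≤ 1. If j is the largest index with x_j < A, then the sorted sequence of the new multiset is x_1,...,x_{i-1}, x_{i+1},...,x_j, A, x_{j+1},...,x_n, and the L1 difference between the two sorted sequences equals A − x_i. -/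
theorem tele_aux : ∀ (s : List ℝ) (a A : ℝ), (a :: (s ++ [A])).Pairwise (· ≤ ·) →
    (List.zipWith (fun a b => |a - b|) (a :: s) (s ++ [A])).sum = A - a
  | [], a, A, h => by
      have : a ≤ A := (List.pairwise_cons.mp h).1 A (by simp)
      simp [abs_of_nonpos (by linarith : a - A ≤ 0)]
  | b :: t, a, A, h => by
      have h1 : a ≤ b := (List.pairwise_cons.mp h).1 b (by simp)
      have h2 := (List.pairwise_cons.mp h).2
      simp only [List.cons_append, List.zipWith_cons_cons, List.sum_cons] at *
      rw [tele_aux t b A h2, abs_of_nonpos (by linarith : a - b ≤ 0)]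
      ring

theorem aux_sorted (p q : List ℝ) (A : ℝ) (h : (p ++ q).Pairwise (· ≤ ·))
    (h2 : ∀ b ∈ p, b ≤ A) (h3 : ∀ b ∈ q, A ≤ b) :
    (p ++ [A] ++ q).Pairwise (· ≤ ·) := by
  rw [List.append_assoc, List.singleton_append]
  rw [List.pairwise_append] at h ⊢
  obtain ⟨hp, hq, hpq⟩ := h
  refine ⟨hp, List.pairwise_cons.mpr ⟨h3, hq⟩, ?_⟩
  intro a ha b hb
  rcases List.mem_cons.mp hb with rfl | hb
  · exact h2 a ha
  · exact hpq a ha b hb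

/-- Replacing `x_i` by a larger value `A ≤ 1` in a sorted list: the new sorted sequence
is `x_1,…,x_{i-1}, x_{i+1},…,x_j, A, x_{j+1},…,x_n` where `j` is the largest index with
`x_j < A`, and the L1 difference between the two sorted sequences equals `A - x_i`. -/
theorem stmt_2 (n : ℕ) (l : List ℝ) (hlen : l.length = n)
    (hsort : l.Pairwise (· ≤ ·))
    (hmem : ∀ a ∈ l, a ∈ Set.Icc (0:ℝ) 1)
    (i j : Fin n) (A : ℝ)
    (hiA : l.get (Fin.cast hlen.symm i) < A) (hA1 : A ≤ 1)
    (hj : l.get (Fin.cast hlen.symm j) < A)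
    (hjmax : ∀ j' : Fin n, l.get (Fin.cast hlen.symm j') < A → j' ≤ j) :
    ((↑l : Multiset ℝ).erase (l.get (Fin.cast hlen.symm i)) + {A}).sort (· ≤ ·)
        = l.take i ++ (l.drop (i + 1)).take (j - i) ++ [A] ++ l.drop (j + 1) ∧
    (List.zipWith (fun a b => |a - b|) l
        (l.take i ++ (l.drop (i + 1)).take (j - i) ++ [A] ++ l.drop (j + 1))).sum
      = A - l.get (Fin.cast hlen.symm i) := by
  have hin : (i:ℕ) < l.length := hlen ▸ i.isLt
  have hjn : (j:ℕ) < l.length := hlen ▸ j.isLt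
  have hgi : l.get (Fin.cast hlen.symm i) = l[(i:ℕ)] := rfl
  have hgj : l.get (Fin.cast hlen.symm j) = l[(j:ℕ)] := rfl
  rw [hgi] at hiA ⊢
  rw [hgj] at hj
  have hpw := List.pairwise_iff_getElem.mp hsort
  have hij : (i:ℕ) ≤ (j:ℕ) := hjmax i hiA
  have hlt : ∀ k, ∀ hk : k < l.length, k ≤ (j:ℕ) → l[k] < A := by
    intro k hk hkj
    rcases eq_or_lt_of_le hkj with h | h
    · exact h ▸ hj
    · exact lt_of_le_of_lt (hpw k j hk hjn h) hj
  have hge : ∀ k, ∀ hk : k < l.length, (j:ℕ) < k → A ≤ l[k] := by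
    intro k hk hkj
    by_contra h
    push_neg at h
    have h2 := hjmax ⟨k, hlen ▸ hk⟩ h
    simp [Fin.le_def] at h2
    omega
  set mid := (l.drop ((i:ℕ) + 1)).take ((j:ℕ) - (i:ℕ)) with hmid
  have hdropsplit : l.drop ((i:ℕ)+1) = mid ++ l.drop ((j:ℕ)+1) := by
    rw [hmid]
    conv_lhs => rw [← List.take_append_drop ((j:ℕ)-(i:ℕ)) (l.drop ((i:ℕ)+1))]
    rw [List.drop_drop]
    congr 2
    omega
  have hl_split : l = l.take (i:ℕ) ++ l[(i:ℕ)] :: l.drop ((i:ℕ)+1) := by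
    conv_lhs => rw [← List.take_append_drop (i:ℕ) l, List.drop_eq_getElem_cons hin]
  have hl_split2 : l = l.take (i:ℕ) ++ l[(i:ℕ)] :: (mid ++ l.drop ((j:ℕ)+1)) := by
    rw [← hdropsplit]; exact hl_split
  -- membership facts
  have hmemlt : ∀ b ∈ l.take (i:ℕ) ++ mid, b < A := by
    intro b hb
    rcases List.mem_append.mp hb with hb | hb
    · rcases List.mem_take_iff_getElem.mp hb with ⟨k, hk, rfl⟩
      exact hlt k (by omega) (by omega)
    · rw [hmid] at hb
      rcases List.mem_take_iff_getElem.mp hb with ⟨k, hk, rfl⟩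
      rw [List.getElem_drop]
      have hk' : k < ((j:ℕ) - (i:ℕ)) ⊓ (l.length - ((i:ℕ)+1)) := by simpa using hk
      exact hlt ((i:ℕ)+1+k) (by omega) (by omega)
  have hmemge : ∀ b ∈ l.drop ((j:ℕ)+1), A ≤ b := by
    intro b hb
    rcases List.mem_drop_iff_getElem.mp hb with ⟨k, hk, rfl⟩
    exact hge _ (by omega) (by omega)
  -- sortedness of the new list
  have hsub : (l.take (i:ℕ) ++ mid ++ l.drop ((j:ℕ)+1)).Sublist l := by
    conv_rhs => rw [hl_split, hdropsplit]
    simp only [List.append_assoc]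
    exact List.Sublist.append_left ((mid ++ l.drop ((j:ℕ)+1)).sublist_cons_self _) _
  have hm := hsort.sublist hsub
  have hsL' : (l.take (i:ℕ) ++ mid ++ [A] ++ l.drop ((j:ℕ)+1)).Pairwise (· ≤ ·) :=
    aux_sorted _ _ _ hm (fun b hb => (hmemlt b hb).le) hmemge
  -- multiset equality
  have e1 : (↑l : Multiset ℝ) = l[(i:ℕ)] ::ₘ ↑(l.take (i:ℕ) ++ (mid ++ l.drop ((j:ℕ)+1))) := by
    calc (↑l : Multiset ℝ) = ↑(l.take (i:ℕ) ++ l[(i:ℕ)] :: (mid ++ l.drop ((j:ℕ)+1))) := by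
          rw [← hl_split2]
      _ = _ := by
          rw [Multiset.cons_coe]
          exact Multiset.coe_eq_coe.mpr List.perm_middle
  have hms : ((↑l : Multiset ℝ).erase l[(i:ℕ)] + {A}) =
      ↑(l.take (i:ℕ) ++ mid ++ [A] ++ l.drop ((j:ℕ)+1)) := by
    rw [e1, Multiset.erase_cons_head]
    simp only [← Multiset.coe_add, ← Multiset.coe_singleton]
    refine Multiset.coe_eq_coe.mpr ?_
    simp only [List.append_assoc]
    exact List.Perm.append_left _ (List.Perm.append_left _ List.perm_append_comm)
  refine ⟨?_, ?_⟩
  · have hcoe : (((((↑l : Multiset ℝ).erase l[(i:ℕ)] + {A}).sort (· ≤ ·)) : List ℝ) : Multiset ℝ)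
        = ↑(l.take (i:ℕ) ++ mid ++ [A] ++ l.drop ((j:ℕ)+1)) := by
      rw [Multiset.sort_eq]; exact hms
    exact List.Perm.eq_of_pairwise' (Multiset.pairwise_sort _ _) hsL'
      (Multiset.coe_eq_coe.mp hcoe)
  · have htj : l.take ((j:ℕ)+1) = l.take (i:ℕ) ++ (l[(i:ℕ)] :: mid) := by
      rw [show (j:ℕ)+1 = (i:ℕ) + ((j:ℕ)+1-(i:ℕ)) from by omega, List.take_add]
      congr 1
      rw [List.drop_eq_getElem_cons hin,
        show (j:ℕ)+1-(i:ℕ) = ((j:ℕ)-(i:ℕ))+1 from by omega, List.take_succ_cons]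
    have hsub2 : (l[(i:ℕ)] :: mid).Sublist l := by
      rw [← List.take_succ_cons, ← List.drop_eq_getElem_cons hin]
      exact (List.take_sublist _ _).trans (List.drop_sublist _ _)
    have hsort2 : (l[(i:ℕ)] :: (mid ++ [A])).Pairwise (· ≤ ·) := by
      have := aux_sorted (l[(i:ℕ)] :: mid) [] A (by simpa using hsort.sublist hsub2)
        (fun b hb => by
          rcases List.mem_cons.mp hb with rfl | hb
          · exact hiA.le
          · exact (hmemlt b (by simp [hb])).le)
        (by simp)
      simpa using this
    have hz : List.zipWith (fun a b => |a - b|) l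
          (l.take (i:ℕ) ++ mid ++ [A] ++ l.drop ((j:ℕ)+1))
        = List.zipWith (fun a b => |a - b|)
            ((l.take (i:ℕ) ++ (l[(i:ℕ)] :: mid)) ++ l.drop ((j:ℕ)+1))
            ((l.take (i:ℕ) ++ (mid ++ [A])) ++ l.drop ((j:ℕ)+1)) := by
      congr 1
      · rw [← htj, List.take_append_drop]
      · simp [List.append_assoc]
    rw [hz, List.zipWith_append (by rw [hmid]; simp; try omega), List.sum_append,
      List.zipWith_append (by simp),
      List.sum_append, List.zipWith_self, tele_aux mid l[(i:ℕ)] A hsort2]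
    simp [List.zipWith_self, sub_self]
end

section
/- Let H = {h_1,...,h_m} be a partition of the index set {1,...,n}, and define S_H(D) to be the sequence of sums y_i = Σ_{j ∈ h_i} x_j where ⟨x_1,...,x_n⟩ is the sorted sequence of the multiset D of reals in [0,1]. Then for any two replacement-neighboring multisets D1 and D2, ‖S_H(D1) − S_H(D2)‖_1 ≤ 1. -/
private lemma sorted_rel_forall₂ : ∀ (l₁ l₂ : List ℝ),
    Multiset.Rel (· ≤ ·) (l₁ : Multiset ℝ) (l₂ : Multiset ℝ) → l₁.Pairwise (· ≤ ·) → l₂.Pairwise (· ≤ ·) →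
    List.Forall₂ (· ≤ ·) l₁ l₂ := by
  intro l₁
  induction l₁ with
  | nil =>
    intro l₂ hrel _ _
    have : (l₂ : Multiset ℝ) = 0 := Multiset.rel_zero_left.mp hrel
    rw [Multiset.coe_eq_zero] at this
    subst this; exact List.Forall₂.nil
  | cons a l₁ ih =>
    intro l₂ hrel h1 h2
    cases l₂ with
    | nil =>
      exfalso
      have : ((a :: l₁ : List ℝ) : Multiset ℝ) = 0 := Multiset.rel_zero_right.mp hrel
      simp at this
    | cons b l₂ =>
      have hrel' : Multiset.Rel (· ≤ ·) (a ::ₘ ↑l₁) (b ::ₘ ↑l₂) := hrel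
      obtain ⟨a'', s', hab, hrel₂, heq⟩ := Multiset.rel_cons_right.mp hrel'
      have ha'' : a'' ∈ a ::ₘ (l₁ : Multiset ℝ) := heq ▸ Multiset.mem_cons_self _ _
      have ha_le : a ≤ a'' := by
        rcases Multiset.mem_cons.mp ha'' with h | h
        · exact h.symm.le
        · exact List.rel_of_pairwise_cons h1 (by exact_mod_cast h)
      have hab' : a ≤ b := ha_le.trans hab
      have key : Multiset.Rel (· ≤ ·) (l₁ : Multiset ℝ) (l₂ : Multiset ℝ) := by
        by_cases hc : a'' = a
        · subst hc
          have : (l₁ : Multiset ℝ) = s' := (Multiset.cons_inj_right _).mp heq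
          rwa [this]
        · have haS : a ∈ s' := by
            have : a ∈ a'' ::ₘ s' := heq ▸ Multiset.mem_cons_self _ _
            rcases Multiset.mem_cons.mp this with h | h
            · exact absurd h.symm hc
            · exact h
          have hs' : a ::ₘ s'.erase a = s' := Multiset.cons_erase haS
          have hl₁ : (l₁ : Multiset ℝ) = a'' ::ₘ s'.erase a := by
            have heq2 : a ::ₘ (l₁ : Multiset ℝ) = a'' ::ₘ a ::ₘ s'.erase a := by
              rw [hs']; exact heq
            rw [Multiset.cons_swap] at heq2
            exact (Multiset.cons_inj_right _).mp heq2
          rw [← hs'] at hrel₂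
          obtain ⟨c, t', hac, hrel₃, hl₂⟩ := Multiset.rel_cons_left.mp hrel₂
          have hcmem : c ∈ (l₂ : Multiset ℝ) := hl₂ ▸ Multiset.mem_cons_self _ _
          have hbc : b ≤ c := List.rel_of_pairwise_cons h2 (by exact_mod_cast hcmem)
          rw [hl₁, hl₂]
          exact Multiset.Rel.cons (hab.trans hbc) hrel₃
      exact List.Forall₂.cons hab' (ih l₂ key h1.of_cons h2.of_cons)

private lemma aux_3 (n m : ℕ) (H : Fin m → Finset (Fin n))
    (hdisj : ∀ i j, i ≠ j → Disjoint (H i) (H j))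
    (D1 D2 : Multiset ℝ) (u v : ℝ)
    (hu0 : 0 ≤ u) (hv1 : v ≤ 1)
    (hu : u ∈ D1) (hrep : D2 = D1.erase u + {v}) (huv : u ≤ v)
    (p q : Fin n → ℝ)
    (hp : List.ofFn p = D1.sort (· ≤ ·))
    (hq : List.ofFn q = D2.sort (· ≤ ·)) :
    ∑ i : Fin m, |(∑ j ∈ H i, q j) - ∑ j ∈ H i, p j| ≤ 1 := by
  have hD1e : ((List.ofFn p : List ℝ) : Multiset ℝ) = D1 := by rw [hp]; exact D1.sort_eq _
  have hD2e : ((List.ofFn q : List ℝ) : Multiset ℝ) = D2 := by rw [hq]; exact D2.sort_eq _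
  have hD2c : D2 = v ::ₘ D1.erase u := by
    rw [hrep, add_comm, Multiset.singleton_add]
  have hrelD : Multiset.Rel (· ≤ ·) D1 D2 := by
    rw [hD2c]
    have h := Multiset.Rel.cons (r := (· ≤ ·)) huv
      (Multiset.rel_refl_of_refl_on (m := D1.erase u) fun x _ => le_refl x)
    rwa [Multiset.cons_erase hu] at h
  have hF : List.Forall₂ (· ≤ ·) (List.ofFn p) (List.ofFn q) := by
    apply sorted_rel_forall₂
    · rw [hD1e, hD2e]; exact hrelD
    · rw [hp]; exact D1.pairwise_sort _
    · rw [hq]; exact D2.pairwise_sort _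
  have hpq : ∀ j : Fin n, p j ≤ q j := by
    intro j
    obtain ⟨hlen, hget⟩ := List.forall₂_iff_get.mp hF
    have := hget j.1 (by simp [j.2]) (by simp [j.2])
    simpa [List.get_ofFn] using this
  have hsum1 : ∑ j : Fin n, p j = D1.sum := by
    rw [← List.sum_ofFn, ← hD1e, Multiset.sum_coe]
  have hsum2 : ∑ j : Fin n, q j = D2.sum := by
    rw [← List.sum_ofFn, ← hD2e, Multiset.sum_coe]
  have h1s : D1.sum = u + (D1.erase u).sum := by
    conv_lhs => rw [← Multiset.cons_erase hu]
    rw [Multiset.sum_cons]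
  have hdiff : ∑ j : Fin n, (q j - p j) = v - u := by
    rw [Finset.sum_sub_distrib, hsum1, hsum2, hD2c, Multiset.sum_cons, h1s]
    ring
  have hpd : (↑(Finset.univ : Finset (Fin m)) : Set (Fin m)).PairwiseDisjoint H := by
    intro i _ j _ hij; exact hdisj i j hij
  calc ∑ i : Fin m, |(∑ j ∈ H i, q j) - ∑ j ∈ H i, p j|
      = ∑ i : Fin m, ∑ j ∈ H i, (q j - p j) := by
        apply Finset.sum_congr rfl
        intro i _
        rw [← Finset.sum_sub_distrib]
        exact abs_of_nonneg (Finset.sum_nonneg fun j _ => sub_nonneg.mpr (hpq j))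
    _ = ∑ j ∈ Finset.univ.biUnion H, (q j - p j) :=
        (Finset.sum_biUnion hpd).symm
    _ ≤ ∑ j : Fin n, (q j - p j) :=
        Finset.sum_le_sum_of_subset_of_nonneg (Finset.subset_univ _)
          (fun j _ _ => sub_nonneg.mpr (hpq j))
    _ = v - u := hdiff
    _ ≤ 1 := by linarith

/-- Group sums over any partition of the sorted sequence have sensitivity at most 1
w.r.t. replacement neighbors. -/
theorem stmt_3 (n m : ℕ) (H : Fin m → Finset (Fin n))
    (hdisj : ∀ i j, i ≠ j → Disjoint (H i) (H j))
    (hcover : ∀ a : Fin n, ∃ i, a ∈ H i)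
    (D1 D2 : Multiset ℝ) (u v : ℝ)
    (hD1 : ∀ a ∈ D1, a ∈ Set.Icc (0:ℝ) 1)
    (hD2 : ∀ a ∈ D2, a ∈ Set.Icc (0:ℝ) 1)
    (hu : u ∈ D1) (hrep : D2 = D1.erase u + {v})
    (p q : Fin n → ℝ)
    (hp : List.ofFn p = D1.sort (· ≤ ·))
    (hq : List.ofFn q = D2.sort (· ≤ ·)) :
    ∑ i : Fin m, |(∑ j ∈ H i, q j) - ∑ j ∈ H i, p j| ≤ 1 := by
  have hD2c : D2 = v ::ₘ D1.erase u := by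
    rw [hrep, add_comm, Multiset.singleton_add]
  have hv : v ∈ D2 := by rw [hD2c]; exact Multiset.mem_cons_self _ _
  rcases le_total u v with h | h
  · exact aux_3 n m H hdisj D1 D2 u v (hD1 u hu).1 (hD2 v hv).2 hu hrep h p q hp hq
  · have hrep' : D1 = D2.erase v + {u} := by
      rw [hD2c, Multiset.erase_cons_head, add_comm, Multiset.singleton_add,
        Multiset.cons_erase hu]
    simp_rw [abs_sub_comm]
    exact aux_3 n m H hdisj D2 D1 v u (hD2 v hv).1 (hD1 u hu).2 hv hrep' h q p hq hp
end

section
/- The isotonic regression x of a is a piecewise-constant 'pool adjacent violators' solution: on each maximal constant block B of x, the common value equals the mean of the a_i for i ∈ B. -/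
/-- On each maximal constant block of the isotonic regression `x` of `a`, the common
value equals the mean of `a` over the block. (Since `x` is monotone, the maximal
constant block with value `c` is exactly the level set `{i | x i = c}`.) -/
theorem stmt_17 (n : ℕ) (a x : Fin n → ℝ)
    (hx : Monotone x)
    (hxmin : ∀ u : Fin n → ℝ, Monotone u → ∑ i, (x i - a i) ^ 2 ≤ ∑ i, (u i - a i) ^ 2)
    (c : ℝ) (B : Finset (Fin n)) (hB : B.Nonempty)
    (hBc : ∀ i, x i = c ↔ i ∈ B) :
    c = (∑ i ∈ B, a i) / B.card := by
  classical
  have hKpos : 0 < (B.card : ℝ) := by exact_mod_cast Finset.card_pos.mpr hB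
  set K : ℝ := (B.card : ℝ) with hKdef
  set S : ℝ := ∑ i ∈ B, (c - a i) with hS
  -- the gap δ
  set T : Finset (Fin n) := Finset.univ.filter (fun i => x i ≠ c) with hT
  set δ : ℝ := if h : T.Nonempty then T.inf' h (fun i => |x i - c|) else 1 with hδ
  have hδpos : 0 < δ := by
    rw [hδ]
    split
    · rename_i h
      rw [Finset.lt_inf'_iff]
      intro i hi
      have : x i ≠ c := (Finset.mem_filter.mp hi).2
      exact abs_pos.mpr (sub_ne_zero.mpr this)
    · norm_num
  have hδle : ∀ i, i ∉ B → δ ≤ |x i - c| := by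
    intro i hi
    have hxi : x i ≠ c := fun h => hi ((hBc i).mp h)
    have hiT : i ∈ T := Finset.mem_filter.mpr ⟨Finset.mem_univ i, hxi⟩
    rw [hδ]
    rw [dif_pos ⟨i, hiT⟩]
    exact Finset.inf'_le _ hiT
  -- perturbed function is monotone
  have hmono : ∀ ε : ℝ, |ε| ≤ δ →
      Monotone (fun i => x i + if i ∈ B then ε else 0) := by
    intro ε hε i j hij
    have hεle : ε ≤ δ := le_trans (le_abs_self ε) hε
    have hεge : -δ ≤ ε := neg_le_of_neg_le (le_trans (neg_le_abs ε) hε)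
    by_cases hiB : i ∈ B <;> by_cases hjB : j ∈ B <;> simp only [hiB, hjB, if_pos, if_neg,
      if_true, if_false]
    · simp only [(hBc i).mpr hiB, (hBc j).mpr hjB, le_refl]
    · -- i ∈ B, j ∉ B : x i = c, x j > c, x j - c ≥ δ
      have hxi : x i = c := (hBc i).mpr hiB
      have hxj : c ≤ x j := hxi ▸ hx hij
      have hne : x j ≠ c := fun h => hjB ((hBc j).mp h)
      have : δ ≤ x j - c := by
        have := hδle j hjB
        rw [abs_of_nonneg (by linarith)] at this
        exact this
      simp only [add_zero]
      linarith
    · -- i ∉ B, j ∈ B : x i < c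
      have hxj : x j = c := (hBc j).mpr hjB
      have hxi : x i ≤ c := hxj ▸ hx hij
      have : δ ≤ c - x i := by
        have := hδle i hiB
        rw [abs_of_nonpos (by linarith)] at this
        linarith [this]
      simp only [add_zero]
      linarith
    · simpa using hx hij
  -- expansion of the objective
  have expand : ∀ ε : ℝ, ∑ i, ((x i + if i ∈ B then ε else 0) - a i) ^ 2
      = ∑ i, (x i - a i) ^ 2 + (2 * ε * S + ε ^ 2 * K) := by
    intro ε
    have h1 : ∀ i : Fin n, ((x i + if i ∈ B then ε else 0) - a i) ^ 2
        = (x i - a i) ^ 2 + (if i ∈ B then 2 * ε * (c - a i) + ε ^ 2 else 0) := by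
      intro i
      by_cases hiB : i ∈ B
      · have hxi : x i = c := (hBc i).mpr hiB
        simp only [hiB, if_true, hxi]
        ring
      · simp [hiB]
    rw [Finset.sum_congr rfl (fun i _ => h1 i), Finset.sum_add_distrib]
    congr 1
    rw [Finset.sum_ite_mem, Finset.univ_inter, Finset.sum_add_distrib,
      ← Finset.mul_sum, Finset.sum_const, nsmul_eq_mul]
    ring
  have hquad : ∀ ε : ℝ, |ε| ≤ δ → 0 ≤ 2 * ε * S + ε ^ 2 * K := by
    intro ε hε
    have := hxmin _ (hmono ε hε)
    rw [expand ε] at this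
    linarith
  -- conclude S = 0
  have hS0 : S = 0 := by
    by_contra hne
    set m : ℝ := min δ (|S| / K) with hm
    have hmpos : 0 < m := lt_min hδpos (div_pos (abs_pos.mpr hne) hKpos)
    have hmδ : m ≤ δ := min_le_left _ _
    have hmK : m * K ≤ |S| := by
      have : m ≤ |S| / K := min_le_right _ _
      calc m * K ≤ (|S| / K) * K := by nlinarith
        _ = |S| := by field_simp
    rcases lt_or_gt_of_ne hne with hSneg | hSpos
    · -- S < 0 : take ε = m
      have h := hquad m (by rw [abs_of_pos hmpos]; exact hmδ)
      have habs : |S| = -S := abs_of_neg hSneg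
      nlinarith
    · -- S > 0 : take ε = -m
      have h := hquad (-m) (by rw [abs_neg, abs_of_pos hmpos]; exact hmδ)
      have habs : |S| = S := abs_of_pos hSpos
      nlinarith
  have hsum : ∑ i ∈ B, (c - a i) = K * c - ∑ i ∈ B, a i := by
    rw [Finset.sum_sub_distrib, Finset.sum_const, nsmul_eq_mul]
  rw [hS, hsum] at hS0
  field_simp
  linarith
end
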